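/- The function d(z,w) = |1-⟨z,w⟩|^{1/2} on the closed unit ball of ℂⁿ satisfies the triangle inequality: d(z,w) ≤ d(z,ξ) + d(ξ,w) for all z, w, ξ in the closed unit ball. -/

import Mathlib

open scoped InnerProductSpace

/-- The Hermitian inner product `⟨z,w⟩ = Σᵢ zᵢ ·conj wᵢ` (linear in the first slot). -/
noncomputable def hin {n : ℕ} (z w : EuclideanSpace ℂ (Fin n)) : ℂ :=
  ∑ i, z i * (starRingEnd ℂ) (w i)

theorem stmt_6 (n : ℕ) (z w ξ : EuclideanSpace ℂ (Fin n))
    (hz : ‖z‖ ≤ 1) (hw : ‖w‖ ≤ 1) (hξ : ‖ξ‖ ≤ 1) :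
    Real.sqrt (‖1 - hin z w‖) ≤
      Real.sqrt (‖1 - hin z ξ‖) + Real.sqrt (‖1 - hin ξ w‖) := by
  have hin_eq : ∀ (p q : EuclideanSpace ℂ (Fin n)), hin p q = ⟪q, p⟫_ℂ := by
    intro p q
    simp [hin, PiLp.inner_apply, mul_comm]
  set A : ℝ := ‖1 - hin z ξ‖ with hA
  set B : ℝ := ‖1 - hin ξ w‖ with hB
  have hA0 : 0 ≤ A := norm_nonneg _
  have hB0 : 0 ≤ B := norm_nonneg _
  set c : ℝ := 1 - ‖ξ‖^2 with hc
  have hc0 : 0 ≤ c := by nlinarith [norm_nonneg ξ]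
  set u : ℝ := ‖ξ - z‖ with hu
  set v : ℝ := ‖ξ - w‖ with hv
  have hu0 : 0 ≤ u := norm_nonneg _
  have hv0 : 0 ≤ v := norm_nonneg _
  -- c + u^2 ≤ 2A
  have hu2 : c + u^2 ≤ 2 * A := by
    have h1 : u^2 = ‖ξ‖^2 - 2 * Complex.re ⟪ξ, z⟫_ℂ + ‖z‖^2 := by
      simpa using @norm_sub_sq ℂ _ _ _ _ ξ z
    have h2 : Complex.re (1 - hin z ξ) ≤ A := Complex.re_le_norm _
    have h3 : Complex.re (1 - hin z ξ) = 1 - Complex.re ⟪ξ, z⟫_ℂ := by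
      rw [hin_eq]; simp
    nlinarith [norm_nonneg z]
  have hv2 : c + v^2 ≤ 2 * B := by
    have h1 : v^2 = ‖ξ‖^2 - 2 * Complex.re ⟪ξ, w⟫_ℂ + ‖w‖^2 := by
      simpa using @norm_sub_sq ℂ _ _ _ _ ξ w
    have h2 : Complex.re (1 - hin ξ w) ≤ B := Complex.re_le_norm _
    have hsym : Complex.re ⟪ξ, w⟫_ℂ = Complex.re ⟪w, ξ⟫_ℂ := by
      simpa using inner_re_symm (𝕜 := ℂ) ξ w
    have h3 : Complex.re (1 - hin ξ w) = 1 - Complex.re ⟪w, ξ⟫_ℂ := by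
      rw [hin_eq]; simp
    nlinarith [norm_nonneg w]
  -- key algebraic identity
  have key : (1 : ℂ) - hin z w
      = (1 - hin z ξ) + (1 - hin ξ w) - ((c : ℂ) + ⟪ξ - w, ξ - z⟫_ℂ) := by
    rw [hin_eq z w, hin_eq z ξ, hin_eq ξ w]
    have hX : ⟪ξ - w, ξ - z⟫_ℂ = ⟪ξ, ξ⟫_ℂ - ⟪ξ, z⟫_ℂ - ⟪w, ξ⟫_ℂ + ⟪w, z⟫_ℂ := by
      simp [inner_sub_left, inner_sub_right]; ring
    have hself : ⟪ξ, ξ⟫_ℂ = (‖ξ‖^2 : ℂ) := by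
      rw [inner_self_eq_norm_sq_to_K]; norm_cast
    rw [hX, hself, hc]
    push_cast
    ring
  -- bound the remainder term
  have hCS : ‖⟪ξ - w, ξ - z⟫_ℂ‖ ≤ v * u := by
    exact norm_inner_le_norm (𝕜 := ℂ) (ξ - w) (ξ - z)
  have hrem : ‖(c : ℂ) + ⟪ξ - w, ξ - z⟫_ℂ‖ ≤ c + v * u := by
    calc ‖(c : ℂ) + ⟪ξ - w, ξ - z⟫_ℂ‖
        ≤ ‖(c : ℂ)‖ + ‖⟪ξ - w, ξ - z⟫_ℂ‖ := norm_add_le _ _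
      _ ≤ c + v * u := by
          rw [Complex.norm_real, Real.norm_eq_abs, abs_of_nonneg hc0]
          linarith
  -- c + v*u ≤ 2 √A √B
  have hmix : c + v * u ≤ 2 * Real.sqrt A * Real.sqrt B := by
    have hsq : (c + v * u)^2 ≤ (c + u^2) * (c + v^2) := by nlinarith [sq_nonneg (u - v)]
    have hsA : Real.sqrt A ^ 2 = A := Real.sq_sqrt hA0
    have hsB : Real.sqrt B ^ 2 = B := Real.sq_sqrt hB0
    have hsA0 : 0 ≤ Real.sqrt A := Real.sqrt_nonneg _
    have hsB0 : 0 ≤ Real.sqrt B := Real.sqrt_nonneg _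
    nlinarith [mul_nonneg (mul_nonneg hv0 hu0) hc0, mul_nonneg hsA0 hsB0,
      mul_nonneg hc0 (mul_nonneg hv0 hu0)]
  -- main bound
  have hmain : ‖1 - hin z w‖ ≤ (Real.sqrt A + Real.sqrt B)^2 := by
    have h1 : ‖1 - hin z w‖
        ≤ A + B + ‖(c : ℂ) + ⟪ξ - w, ξ - z⟫_ℂ‖ := by
      rw [key]
      calc ‖(1 - hin z ξ) + (1 - hin ξ w) - ((c : ℂ) + ⟪ξ - w, ξ - z⟫_ℂ)‖
          ≤ ‖(1 - hin z ξ) + (1 - hin ξ w)‖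
            + ‖(c : ℂ) + ⟪ξ - w, ξ - z⟫_ℂ‖ := norm_sub_le _ _
        _ ≤ A + B + ‖(c : ℂ) + ⟪ξ - w, ξ - z⟫_ℂ‖ := by
            have := norm_add_le (1 - hin z ξ) (1 - hin ξ w)
            linarith
    have hsA : Real.sqrt A ^ 2 = A := Real.sq_sqrt hA0
    have hsB : Real.sqrt B ^ 2 = B := Real.sq_sqrt hB0
    nlinarith
  calc Real.sqrt (‖1 - hin z w‖)
      ≤ Real.sqrt ((Real.sqrt A + Real.sqrt B)^2) := Real.sqrt_le_sqrt hmain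
    _ = Real.sqrt A + Real.sqrt B := Real.sqrt_sq (by positivity)
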